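/- Let V be a d×d real symmetric positive definite matrix and u ∈ ℝᵈ satisfy uᵀ V⁻¹ u ≤ 2. Then uᵀ V⁻¹ u ≤ 2 log(det(V + u uᵀ) / det V). -/

import Mathlib

open Matrix

lemma aux_le_two_log {x : ℝ} (h0 : 0 ≤ x) (h2 : x ≤ 2) : x ≤ 2 * Real.log (1 + x) := by
  have hx1 : (0:ℝ) < 1 + x := by linarith
  have key : Real.exp (x/2) ≤ 1 + x := by
    have ht0 : 0 ≤ x/2 := by positivity
    have ht1 : x/2 ≤ 1 := by linarith
    have hconv := convexOn_exp.2 (Set.mem_univ (0:ℝ)) (Set.mem_univ (1:ℝ))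
      (by linarith : (0:ℝ) ≤ 1 - x/2) ht0 (by ring)
    simp only [smul_eq_mul, mul_zero, mul_one, zero_add, Real.exp_zero] at hconv
    nlinarith [Real.exp_one_lt_d9]
  have := (Real.le_log_iff_exp_le hx1).2 key
  linarith

/-- The small-norm case of the per-step bound in the proof of the
generalized elliptical potential lemma. -/
theorem small_norm_log_det {d : ℕ} (V : Matrix (Fin d) (Fin d) ℝ) (hV : V.PosDef)
    (u : Fin d → ℝ) (hu : u ⬝ᵥ V⁻¹ *ᵥ u ≤ 2) :
    u ⬝ᵥ V⁻¹ *ᵥ u ≤ 2 * Real.log ((V + vecMulVec u u).det / V.det) := by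
  set x := u ⬝ᵥ V⁻¹ *ᵥ u with hx
  have hx0 : 0 ≤ x := hV.inv.posSemidef.re_dotProduct_nonneg u
  have hdet : 0 < V.det := hV.det_pos
  have hdetU : IsUnit V.det := isUnit_iff_ne_zero.2 hdet.ne'
  have hfac : V + vecMulVec u u = V * (1 + replicateCol (Fin 1) (V⁻¹ *ᵥ u) * replicateRow (Fin 1) u) := by
    rw [Matrix.mul_add, Matrix.mul_one, ← Matrix.mul_assoc, ← replicateCol_mulVec,
      Matrix.mulVec_mulVec, Matrix.mul_nonsing_inv V hdetU, Matrix.one_mulVec,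
      vecMulVec_eq (Fin 1)]
    rfl
  have hkey : (V + vecMulVec u u).det = V.det * (1 + x) := by
    rw [hfac, det_mul]
    exact congrArg (V.det * ·) (det_one_add_replicateCol_mul_replicateRow (ι := Fin 1) _ _)
  rw [hkey, mul_comm V.det, mul_div_assoc, div_self hdet.ne', mul_one]
  exact aux_le_two_log hx0 hu
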